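/- The overlap between the ideal output and the error vector satisfies |⟨cor, err⟩| ≤ √(1−p) / √m; consequently the final state fin = cor + err satisfies |⟨cor, fin⟩| ≥ 1 − √(1−p)/√m ≥ 1 − 1/√m. -/

import Mathlib

lemma aux_sum_conj_prod {m d : ℕ} (u w : Fin m → Fin d → ℂ) :
    ∑ f : Fin m → Fin d, ((starRingEnd ℂ) (∏ i, u i (f i)) * ∏ i, w i (f i))
      = ∏ i, ∑ x, (starRingEnd ℂ) (u i x) * w i x := by
  simp_rw [map_prod, ← Finset.prod_mul_distrib]
  rw [Finset.prod_univ_sum]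
  simp

lemma aux_sum_factor {m d : ℕ} (F : (Fin m → Fin d) → ℂ) (G : Fin m → ℂ) (H : Fin 2 → ℂ) :
    ∑ q : (Fin m → Fin d) × Fin m × Fin 2, F q.1 * G q.2.1 * H q.2.2
      = (∑ f, F f) * (∑ j, G j) * (∑ b, H b) := by
  rw [Fintype.sum_prod_type]
  simp_rw [Fintype.sum_prod_type, ← Finset.mul_sum, ← Finset.sum_mul, ← Finset.sum_mul_sum]

lemma aux_factor {m d : ℕ} (F : (Fin m → Fin d) → ℂ) (V : Fin m → (Fin m → Fin d) → ℂ)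
    (G : Fin m → ℂ) (H : Fin 2 → ℂ) (c : ℂ)
    (hFV : ∀ j'', ∑ f, F f * V j'' f = c) :
    ∑ q : (Fin m → Fin d) × Fin m × Fin 2, F q.1 * V q.2.1 q.1 * G q.2.1 * H q.2.2
      = c * (∑ j, G j) * (∑ b, H b) := by
  rw [Fintype.sum_prod_type]
  simp_rw [Fintype.sum_prod_type]
  rw [Finset.sum_comm]
  have key : ∀ j'' : Fin m, ∑ f, ∑ b, F f * V j'' f * G j'' * H b
      = (c * G j'') * ∑ b, H b := by
    intro j''
    simp_rw [← Finset.mul_sum]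
    rw [← Finset.sum_mul]
    congr 1
    rw [← Finset.sum_mul, hFV j'']
  simp_rw [key]
  rw [← Finset.sum_mul, ← Finset.mul_sum]

lemma aux_ineq1 (p mm : ℝ) (hp0 : 0 ≤ p) (hp1 : p ≤ 1) (hm1 : 1 ≤ mm) :
    (1 - p) / mm ≤ Real.sqrt (1 - p) / Real.sqrt mm := by
  have hm0 : (0:ℝ) < mm := by linarith
  have hsm : Real.sqrt mm * Real.sqrt mm = mm := Real.mul_self_sqrt hm0.le
  have hsm1 : 1 ≤ Real.sqrt mm := by
    calc (1:ℝ) = Real.sqrt 1 := Real.sqrt_one.symm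
    _ ≤ Real.sqrt mm := Real.sqrt_le_sqrt hm1
  have hsm0 : 0 < Real.sqrt mm := lt_of_lt_of_le one_pos hsm1
  have h1p : (0:ℝ) ≤ 1 - p := by linarith
  have hsp : Real.sqrt (1 - p) * Real.sqrt (1 - p) = 1 - p := Real.mul_self_sqrt h1p
  have hsp0 : 0 ≤ Real.sqrt (1 - p) := Real.sqrt_nonneg _
  have hsp1 : Real.sqrt (1 - p) ≤ 1 := by
    calc Real.sqrt (1 - p) ≤ Real.sqrt 1 := Real.sqrt_le_sqrt (by linarith)
    _ = 1 := Real.sqrt_one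
  rw [div_le_div_iff₀ hm0 hsm0]
  nlinarith [mul_nonneg (mul_nonneg hsp0 hsm0.le) (sub_nonneg.2 (hsp1.trans hsm1))]

lemma aux_ineq2 (p mm : ℝ) (hp0 : 0 ≤ p) (hp1 : p ≤ 1) (hm1 : 1 ≤ mm) :
    Real.sqrt (1 - p) / Real.sqrt mm ≤ (Real.sqrt mm)⁻¹ := by
  have hsm1 : 1 ≤ Real.sqrt mm := by
    calc (1:ℝ) = Real.sqrt 1 := Real.sqrt_one.symm
    _ ≤ Real.sqrt mm := Real.sqrt_le_sqrt hm1
  have hsm0 : 0 < Real.sqrt mm := lt_of_lt_of_le one_pos hsm1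
  have hsp1 : Real.sqrt (1 - p) ≤ 1 := by
    calc Real.sqrt (1 - p) ≤ Real.sqrt 1 := Real.sqrt_le_sqrt (by linarith)
    _ = 1 := Real.sqrt_one
  rw [div_le_iff₀ hsm0, inv_mul_cancel₀ hsm0.ne']
  exact hsp1

/-- The overlap between the ideal output `cor` and the error vector `err`
satisfies `|⟨cor, err⟩| ≤ √(1−p)/√m`; consequently the final state
`fin = cor + err` satisfies `|⟨cor, fin⟩| ≥ 1 − √(1−p)/√m ≥ 1 − 1/√m`.
The total space `R ⊗ (ℂ^d)^{⊗m} ⊗ ℂ^m ⊗ ℂ²` is modelled as the `L²`-space of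
functions from `(Fin m → Fin d) × Fin m × Fin 2` to the abstract space `R`. -/
theorem stmt_9 (m d : ℕ) (hm : 1 ≤ m) (hd : 2 ≤ d)
    (R : Type*) [NormedAddCommGroup R] [InnerProductSpace ℂ R] [FiniteDimensional ℂ R]
    (a₀ a₁ : R) (ha₀ : ‖a₀‖ = 1) (ha₁ : ‖a₁‖ = 1)
    (p : ℝ) (hp0 : 0 ≤ p) (hp1 : p ≤ 1)
    (α αp : Fin d → ℂ)
    (hα : ∑ i, star (α i) * α i = 1) (hαp : ∑ i, star (αp i) * αp i = 1)
    (horth : ∑ i, star (α i) * αp i = 0)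
    (s : Fin m → ℂ) (hs : s = fun _ => (Real.sqrt m : ℂ)⁻¹)
    (ket0 ket1 minus : Fin 2 → ℂ)
    (hket0 : ket0 = fun b => if b = 0 then 1 else 0)
    (hket1 : ket1 = fun b => if b = 1 then 1 else 0)
    (hminus : minus = fun b => (ket0 b - ket1 b) * (Real.sqrt 2 : ℂ)⁻¹)
    (αm : (Fin m → Fin d) → ℂ) (hαm : αm = fun f => ∏ i, α (f i))
    (v : Fin m → (Fin m → Fin d) → ℂ)
    (hv : v = fun k f => ∏ i, (if i = k then αp (f i) else α (f i)))
    (cor err : (Fin m → Fin d) × Fin m × Fin 2 → R)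
    (hcor : cor = fun q =>
        ((Real.sqrt p : ℂ) * αm q.1 * s q.2.1 * ket0 q.2.2) • a₀
        + ((Real.sqrt (1 - p) : ℂ) * v ⟨0, by omega⟩ q.1 * s q.2.1 * ket1 q.2.2) • a₁)
    (herr : err = fun q =>
        (((Real.sqrt 2 / Real.sqrt m ^ 3) * Real.sqrt (1 - p) : ℂ)
            * (∑ j : Fin m, ∑ j' : Fin m,
                v (j - j') q.1 * (if q.2.1 = j' then 1 else 0))
            * minus q.2.2) • a₁) :
    ‖(inner ℂ ((WithLp.equiv 2 ((Fin m → Fin d) × Fin m × Fin 2 → R)).symm cor)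
          ((WithLp.equiv 2 ((Fin m → Fin d) × Fin m × Fin 2 → R)).symm err) : ℂ)‖
        ≤ Real.sqrt (1 - p) / Real.sqrt m
    ∧ 1 - Real.sqrt (1 - p) / Real.sqrt m
        ≤ ‖
            (inner ℂ ((WithLp.equiv 2 ((Fin m → Fin d) × Fin m × Fin 2 → R)).symm cor)
              ((WithLp.equiv 2 ((Fin m → Fin d) × Fin m × Fin 2 → R)).symm cor
                + (WithLp.equiv 2 ((Fin m → Fin d) × Fin m × Fin 2 → R)).symm err) : ℂ)‖
    ∧ 1 - (Real.sqrt m)⁻¹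
        ≤ ‖
            (inner ℂ ((WithLp.equiv 2 ((Fin m → Fin d) × Fin m × Fin 2 → R)).symm cor)
              ((WithLp.equiv 2 ((Fin m → Fin d) × Fin m × Fin 2 → R)).symm cor
                + (WithLp.equiv 2 ((Fin m → Fin d) × Fin m × Fin 2 → R)).symm err) : ℂ)‖ := by
  haveI : NeZero m := ⟨by omega⟩
  have hm0 : (0:ℝ) < m := by exact_mod_cast Nat.lt_of_lt_of_le Nat.zero_lt_one hm
  have hm1 : (1:ℝ) ≤ m := by exact_mod_cast hm
  have hsm : Real.sqrt m * Real.sqrt m = m := Real.mul_self_sqrt hm0.le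
  have hsm1 : 1 ≤ Real.sqrt m := by
    rw [show (1:ℝ) = Real.sqrt 1 from Real.sqrt_one.symm]
    exact Real.sqrt_le_sqrt hm1
  have hsm0 : 0 < Real.sqrt m := lt_of_lt_of_le one_pos hsm1
  have h1p : 0 ≤ 1 - p := by linarith
  have hsp : Real.sqrt (1 - p) * Real.sqrt (1 - p) = 1 - p := Real.mul_self_sqrt h1p
  have hsp1 : Real.sqrt (1 - p) ≤ 1 := by
    calc Real.sqrt (1 - p) ≤ Real.sqrt 1 := Real.sqrt_le_sqrt (by linarith)
    _ = 1 := Real.sqrt_one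
  have hsp0 : 0 ≤ Real.sqrt (1 - p) := Real.sqrt_nonneg _
  have h0 : (⟨0, by omega⟩ : Fin m) = 0 := by ext; simp
  rw [h0] at hcor
  -- conjugate versions of hypotheses
  have hα' : ∑ i, (starRingEnd ℂ) (α i) * α i = 1 := hα
  have hαp' : ∑ i, (starRingEnd ℂ) (αp i) * αp i = 1 := hαp
  have horth' : ∑ i, (starRingEnd ℂ) (α i) * αp i = 0 := horth
  have horth2 : ∑ i, (starRingEnd ℂ) (αp i) * α i = 0 := by
    have := congrArg (starRingEnd ℂ) horth'
    simpa [map_sum, mul_comm] using this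
  -- orthonormality of the v's
  have hov : ∀ k k' : Fin m, ∑ f : Fin m → Fin d, (starRingEnd ℂ) (v k f) * v k' f
      = if k = k' then 1 else 0 := by
    intro k k'
    simp only [hv]
    rw [aux_sum_conj_prod (fun i x => if i = k then αp x else α x)
        (fun i x => if i = k' then αp x else α x)]
    by_cases hkk : k = k'
    · subst hkk
      rw [if_pos rfl]
      apply Finset.prod_eq_one
      intro i _
      by_cases hik : i = k <;> simp [hik, hα', hαp']
    · rw [if_neg hkk]
      apply Finset.prod_eq_zero (Finset.mem_univ k)
      simp [hkk, horth2]
  have hαv : ∀ k : Fin m, ∑ f : Fin m → Fin d, (starRingEnd ℂ) (αm f) * v k f = 0 := by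
    intro k
    simp only [hαm, hv]
    rw [aux_sum_conj_prod (fun i x => α x) (fun i x => if i = k then αp x else α x)]
    apply Finset.prod_eq_zero (Finset.mem_univ k)
    simp [horth']
  have hαα : ∑ f : Fin m → Fin d, (starRingEnd ℂ) (αm f) * αm f = 1 := by
    simp only [hαm]
    rw [aux_sum_conj_prod (fun i x => α x) (fun i x => α x)]
    simp [hα']
  have hW : ∀ j'' : Fin m, ∑ f : Fin m → Fin d,
      (starRingEnd ℂ) (v 0 f) * (∑ j : Fin m, v (j - j'') f) = 1 := by
    intro j''
    simp_rw [Finset.mul_sum]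
    rw [Finset.sum_comm]
    have hterm : ∀ j : Fin m, ∑ f : Fin m → Fin d,
        (starRingEnd ℂ) (v 0 f) * v (j - j'') f = if j = j'' then (1:ℂ) else 0 := by
      intro j
      rw [hov 0 (j - j'')]
      by_cases h : j = j''
      · subst h; simp
      · rw [if_neg h, if_neg]
        intro heq
        exact h (sub_eq_zero.1 heq.symm)
    simp_rw [hterm]
    simp
  have hWα : ∀ j'' : Fin m, ∑ f : Fin m → Fin d,
      (starRingEnd ℂ) (αm f) * (∑ j : Fin m, v (j - j'') f) = 0 := by
    intro j''
    simp_rw [Finset.mul_sum]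
    rw [Finset.sum_comm]
    simp [hαv]
  -- scalar sums
  have hsum_s : ∑ j : Fin m, (starRingEnd ℂ) (s j) = ((Real.sqrt m : ℝ) : ℂ) := by
    have hne : ((Real.sqrt m : ℝ) : ℂ) ≠ 0 := by exact_mod_cast hsm0.ne'
    simp only [hs, map_inv₀, Complex.conj_ofReal]
    rw [Finset.sum_const, Finset.card_univ, Fintype.card_fin, nsmul_eq_mul]
    field_simp
    rw [sq, ← Complex.ofReal_mul, hsm]
    norm_cast
  have hsum_ss : ∑ j : Fin m, (starRingEnd ℂ) (s j) * s j = 1 := by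
    have hne : ((Real.sqrt m : ℝ) : ℂ) ≠ 0 := by exact_mod_cast hsm0.ne'
    simp only [hs, map_inv₀, Complex.conj_ofReal]
    rw [Finset.sum_const, Finset.card_univ, Fintype.card_fin, nsmul_eq_mul]
    field_simp
    rw [sq, ← Complex.ofReal_mul, hsm]
    norm_cast
  have hk0m : ∑ b : Fin 2, (starRingEnd ℂ) (ket0 b) * minus b = ((Real.sqrt 2 : ℝ) : ℂ)⁻¹ := by
    simp only [hminus, hket0, hket1]
    rw [Fin.sum_univ_two]
    norm_num
  have hk1m : ∑ b : Fin 2, (starRingEnd ℂ) (ket1 b) * minus b = -((Real.sqrt 2 : ℝ) : ℂ)⁻¹ := by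
    simp only [hminus, hket0, hket1]
    rw [Fin.sum_univ_two]
    norm_num
  have hk00 : ∑ b : Fin 2, (starRingEnd ℂ) (ket0 b) * ket0 b = 1 := by
    simp only [hket0]; rw [Fin.sum_univ_two]; norm_num
  have hk11 : ∑ b : Fin 2, (starRingEnd ℂ) (ket1 b) * ket1 b = 1 := by
    simp only [hket1]; rw [Fin.sum_univ_two]; norm_num
  have hk01 : ∀ b : Fin 2, (starRingEnd ℂ) (ket0 b) * ket1 b = 0 := by
    intro b; rw [hket0, hket1]; fin_cases b <;> norm_num
  have hk10 : ∀ b : Fin 2, (starRingEnd ℂ) (ket1 b) * ket0 b = 0 := by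
    intro b; rw [hket0, hket1]; fin_cases b <;> norm_num
  -- inner products of the targets
  have ha00 : (inner ℂ a₀ a₀ : ℂ) = 1 := by
    rw [inner_self_eq_norm_sq_to_K, ha₀]; norm_num
  have ha11 : (inner ℂ a₁ a₁ : ℂ) = 1 := by
    rw [inner_self_eq_norm_sq_to_K, ha₁]; norm_num
  -- collapse of the error double sum
  have hE : ∀ q : (Fin m → Fin d) × Fin m × Fin 2,
      (∑ j : Fin m, ∑ j' : Fin m, v (j - j') q.1 * (if q.2.1 = j' then 1 else 0))
        = ∑ j : Fin m, v (j - q.2.1) q.1 := by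
    intro q
    refine Finset.sum_congr rfl fun j _ => ?_
    simp
  -- main computation : inner cor err
  have key_ce : (∑ q : (Fin m → Fin d) × Fin m × Fin 2, (inner ℂ (cor q) (err q) : ℂ))
      = ((-((1 - p) / m) : ℝ) : ℂ) := by
    have hstep : ∀ q : (Fin m → Fin d) × Fin m × Fin 2,
        (inner ℂ (cor q) (err q) : ℂ)
          = ((starRingEnd ℂ) ((Real.sqrt p : ℝ) : ℂ)
                * ((Real.sqrt 2 / Real.sqrt m ^ 3) * Real.sqrt (1 - p) : ℂ))
              * ((starRingEnd ℂ) (αm q.1) * (∑ j : Fin m, v (j - q.2.1) q.1)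
                  * (starRingEnd ℂ) (s q.2.1)
                  * ((starRingEnd ℂ) (ket0 q.2.2) * minus q.2.2)) * (inner ℂ a₀ a₁ : ℂ)
          + ((starRingEnd ℂ) ((Real.sqrt (1 - p) : ℝ) : ℂ)
                * ((Real.sqrt 2 / Real.sqrt m ^ 3) * Real.sqrt (1 - p) : ℂ))
              * ((starRingEnd ℂ) (v 0 q.1) * (∑ j : Fin m, v (j - q.2.1) q.1)
                  * (starRingEnd ℂ) (s q.2.1)
                  * ((starRingEnd ℂ) (ket1 q.2.2) * minus q.2.2)) * (inner ℂ a₁ a₁ : ℂ) := by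
      intro q
      rw [hcor, herr]
      simp only []
      rw [hE q]
      rw [inner_add_left, inner_smul_left, inner_smul_left, inner_smul_right, inner_smul_right]
      simp only [map_mul]
      ring
    rw [Finset.sum_congr rfl fun q _ => hstep q]
    rw [Finset.sum_add_distrib]
    rw [show (∑ q : (Fin m → Fin d) × Fin m × Fin 2,
        ((starRingEnd ℂ) ((Real.sqrt p : ℝ) : ℂ)
            * ((Real.sqrt 2 / Real.sqrt m ^ 3) * Real.sqrt (1 - p) : ℂ))
          * ((starRingEnd ℂ) (αm q.1) * (∑ j : Fin m, v (j - q.2.1) q.1)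
              * (starRingEnd ℂ) (s q.2.1)
              * ((starRingEnd ℂ) (ket0 q.2.2) * minus q.2.2)) * (inner ℂ a₀ a₁ : ℂ))
        = ((starRingEnd ℂ) ((Real.sqrt p : ℝ) : ℂ)
            * ((Real.sqrt 2 / Real.sqrt m ^ 3) * Real.sqrt (1 - p) : ℂ))
          * (∑ q : (Fin m → Fin d) × Fin m × Fin 2,
              (starRingEnd ℂ) (αm q.1) * (∑ j : Fin m, v (j - q.2.1) q.1)
              * (starRingEnd ℂ) (s q.2.1)
              * ((starRingEnd ℂ) (ket0 q.2.2) * minus q.2.2)) * (inner ℂ a₀ a₁ : ℂ)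
      from by rw [← Finset.sum_mul, ← Finset.mul_sum]]
    rw [show (∑ q : (Fin m → Fin d) × Fin m × Fin 2,
        ((starRingEnd ℂ) ((Real.sqrt (1 - p) : ℝ) : ℂ)
            * ((Real.sqrt 2 / Real.sqrt m ^ 3) * Real.sqrt (1 - p) : ℂ))
          * ((starRingEnd ℂ) (v 0 q.1) * (∑ j : Fin m, v (j - q.2.1) q.1)
              * (starRingEnd ℂ) (s q.2.1)
              * ((starRingEnd ℂ) (ket1 q.2.2) * minus q.2.2)) * (inner ℂ a₁ a₁ : ℂ))
        = ((starRingEnd ℂ) ((Real.sqrt (1 - p) : ℝ) : ℂ)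
            * ((Real.sqrt 2 / Real.sqrt m ^ 3) * Real.sqrt (1 - p) : ℂ))
          * (∑ q : (Fin m → Fin d) × Fin m × Fin 2,
              (starRingEnd ℂ) (v 0 q.1) * (∑ j : Fin m, v (j - q.2.1) q.1)
              * (starRingEnd ℂ) (s q.2.1)
              * ((starRingEnd ℂ) (ket1 q.2.2) * minus q.2.2)) * (inner ℂ a₁ a₁ : ℂ)
      from by rw [← Finset.sum_mul, ← Finset.mul_sum]]
    rw [aux_factor (fun f => (starRingEnd ℂ) (αm f)) (fun j'' f => ∑ j : Fin m, v (j - j'') f)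
        (fun j => (starRingEnd ℂ) (s j)) (fun b => (starRingEnd ℂ) (ket0 b) * minus b) 0 hWα]
    rw [aux_factor (fun f => (starRingEnd ℂ) (v 0 f)) (fun j'' f => ∑ j : Fin m, v (j - j'') f)
        (fun j => (starRingEnd ℂ) (s j)) (fun b => (starRingEnd ℂ) (ket1 b) * minus b) 1 hW]
    rw [hsum_s, hk1m, ha11]
    simp only [Complex.conj_ofReal, zero_mul, mul_zero, zero_add, one_mul, mul_one]
    have h2ne : ((Real.sqrt 2 : ℝ) : ℂ) ≠ 0 := by
      exact_mod_cast (Real.sqrt_pos.2 (by norm_num : (0:ℝ) < 2)).ne'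
    have hmne : ((Real.sqrt m : ℝ) : ℂ) ≠ 0 := by exact_mod_cast hsm0.ne'
    have hm3 : (Real.sqrt m) ^ 3 = m * Real.sqrt m := by
      rw [pow_succ, pow_two, hsm]
    norm_cast
    rw [hm3]
    have h2pos : (0:ℝ) < Real.sqrt 2 := Real.sqrt_pos.2 (by norm_num)
    field_simp
    ring_nf
    linear_combination (-1 : ℝ) * hsp
  -- main computation : inner cor cor
  have key_cc : (∑ q : (Fin m → Fin d) × Fin m × Fin 2, (inner ℂ (cor q) (cor q) : ℂ))
      = 1 := by
    have hstep : ∀ q : (Fin m → Fin d) × Fin m × Fin 2,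
        (inner ℂ (cor q) (cor q) : ℂ)
          = ((starRingEnd ℂ) ((Real.sqrt p : ℝ) : ℂ) * ((Real.sqrt p : ℝ) : ℂ))
              * (((starRingEnd ℂ) (αm q.1) * αm q.1)
                  * ((starRingEnd ℂ) (s q.2.1) * s q.2.1)
                  * ((starRingEnd ℂ) (ket0 q.2.2) * ket0 q.2.2)) * (inner ℂ a₀ a₀ : ℂ)
          + ((starRingEnd ℂ) ((Real.sqrt (1 - p) : ℝ) : ℂ) * ((Real.sqrt (1 - p) : ℝ) : ℂ))
              * (((starRingEnd ℂ) (v 0 q.1) * v 0 q.1)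
                  * ((starRingEnd ℂ) (s q.2.1) * s q.2.1)
                  * ((starRingEnd ℂ) (ket1 q.2.2) * ket1 q.2.2)) * (inner ℂ a₁ a₁ : ℂ) := by
      intro q
      rw [hcor]
      simp only []
      simp only [inner_add_left, inner_add_right, inner_smul_left, inner_smul_right, map_mul]
      have e01 : (starRingEnd ℂ) (ket0 q.2.2) * ket1 q.2.2 = 0 := hk01 q.2.2
      have e10 : (starRingEnd ℂ) (ket1 q.2.2) * ket0 q.2.2 = 0 := hk10 q.2.2
      linear_combination ((starRingEnd ℂ) ((Real.sqrt p : ℝ) : ℂ) * (starRingEnd ℂ) (αm q.1)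
          * (starRingEnd ℂ) (s q.2.1) * (((Real.sqrt (1 - p) : ℝ) : ℂ) * v 0 q.1 * s q.2.1)
          * (inner ℂ a₀ a₁ : ℂ)) * e01
        + ((starRingEnd ℂ) ((Real.sqrt (1 - p) : ℝ) : ℂ) * (starRingEnd ℂ) (v 0 q.1)
          * (starRingEnd ℂ) (s q.2.1) * (((Real.sqrt p : ℝ) : ℂ) * αm q.1 * s q.2.1)
          * (inner ℂ a₁ a₀ : ℂ)) * e10

    rw [Finset.sum_congr rfl fun q _ => hstep q]
    rw [Finset.sum_add_distrib]
    rw [show (∑ q : (Fin m → Fin d) × Fin m × Fin 2,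
        ((starRingEnd ℂ) ((Real.sqrt p : ℝ) : ℂ) * ((Real.sqrt p : ℝ) : ℂ))
          * (((starRingEnd ℂ) (αm q.1) * αm q.1)
              * ((starRingEnd ℂ) (s q.2.1) * s q.2.1)
              * ((starRingEnd ℂ) (ket0 q.2.2) * ket0 q.2.2)) * (inner ℂ a₀ a₀ : ℂ))
        = ((starRingEnd ℂ) ((Real.sqrt p : ℝ) : ℂ) * ((Real.sqrt p : ℝ) : ℂ))
          * (∑ q : (Fin m → Fin d) × Fin m × Fin 2,
              ((starRingEnd ℂ) (αm q.1) * αm q.1)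
              * ((starRingEnd ℂ) (s q.2.1) * s q.2.1)
              * ((starRingEnd ℂ) (ket0 q.2.2) * ket0 q.2.2)) * (inner ℂ a₀ a₀ : ℂ)
      from by rw [← Finset.sum_mul, ← Finset.mul_sum]]
    rw [show (∑ q : (Fin m → Fin d) × Fin m × Fin 2,
        ((starRingEnd ℂ) ((Real.sqrt (1 - p) : ℝ) : ℂ) * ((Real.sqrt (1 - p) : ℝ) : ℂ))
          * (((starRingEnd ℂ) (v 0 q.1) * v 0 q.1)
              * ((starRingEnd ℂ) (s q.2.1) * s q.2.1)
              * ((starRingEnd ℂ) (ket1 q.2.2) * ket1 q.2.2)) * (inner ℂ a₁ a₁ : ℂ))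
        = ((starRingEnd ℂ) ((Real.sqrt (1 - p) : ℝ) : ℂ) * ((Real.sqrt (1 - p) : ℝ) : ℂ))
          * (∑ q : (Fin m → Fin d) × Fin m × Fin 2,
              ((starRingEnd ℂ) (v 0 q.1) * v 0 q.1)
              * ((starRingEnd ℂ) (s q.2.1) * s q.2.1)
              * ((starRingEnd ℂ) (ket1 q.2.2) * ket1 q.2.2)) * (inner ℂ a₁ a₁ : ℂ)
      from by rw [← Finset.sum_mul, ← Finset.mul_sum]]
    rw [aux_sum_factor (fun f => (starRingEnd ℂ) (αm f) * αm f)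
        (fun j => (starRingEnd ℂ) (s j) * s j)
        (fun b => (starRingEnd ℂ) (ket0 b) * ket0 b)]
    rw [aux_sum_factor (fun f => (starRingEnd ℂ) (v 0 f) * v 0 f)
        (fun j => (starRingEnd ℂ) (s j) * s j)
        (fun b => (starRingEnd ℂ) (ket1 b) * ket1 b)]
    rw [hαα, hsum_ss, hk00, hk11, ha00, ha11]
    have hvv : ∑ f : Fin m → Fin d, (starRingEnd ℂ) (v 0 f) * v 0 f = 1 := by
      rw [hov 0 0, if_pos rfl]
    rw [hvv]
    simp only [Complex.conj_ofReal, one_mul, mul_one]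
    rw [← Complex.ofReal_mul, ← Complex.ofReal_mul, Real.mul_self_sqrt hp0, hsp]
    norm_cast
    ring
  -- rewrite the l2 inner products
  have hconv : ∀ x y : (Fin m → Fin d) × Fin m × Fin 2 → R,
      (inner ℂ ((WithLp.equiv 2 ((Fin m → Fin d) × Fin m × Fin 2 → R)).symm x)
        ((WithLp.equiv 2 ((Fin m → Fin d) × Fin m × Fin 2 → R)).symm y) : ℂ)
        = ∑ q, (inner ℂ (x q) (y q) : ℂ) := by
    intro x y
    rw [PiLp.inner_apply]
    rfl
  have h1 : (inner ℂ ((WithLp.equiv 2 ((Fin m → Fin d) × Fin m × Fin 2 → R)).symm cor)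
      ((WithLp.equiv 2 ((Fin m → Fin d) × Fin m × Fin 2 → R)).symm err) : ℂ)
      = ((-((1 - p) / m) : ℝ) : ℂ) := by rw [hconv, key_ce]
  have h2 : (inner ℂ ((WithLp.equiv 2 ((Fin m → Fin d) × Fin m × Fin 2 → R)).symm cor)
      ((WithLp.equiv 2 ((Fin m → Fin d) × Fin m × Fin 2 → R)).symm cor) : ℂ) = 1 := by
    rw [hconv, key_cc]
  have h3 : (inner ℂ ((WithLp.equiv 2 ((Fin m → Fin d) × Fin m × Fin 2 → R)).symm cor)
      ((WithLp.equiv 2 ((Fin m → Fin d) × Fin m × Fin 2 → R)).symm cor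
        + (WithLp.equiv 2 ((Fin m → Fin d) × Fin m × Fin 2 → R)).symm err) : ℂ)
      = ((1 - (1 - p) / m : ℝ) : ℂ) := by
    rw [inner_add_right, h1, h2]
    push_cast
    ring
  -- real inequalities
  have hkey : (1 - p) / m ≤ Real.sqrt (1 - p) / Real.sqrt m := aux_ineq1 p m hp0 hp1 hm1
  have hkey2 : Real.sqrt (1 - p) / Real.sqrt m ≤ (Real.sqrt m)⁻¹ := aux_ineq2 p m hp0 hp1 hm1
  have hfrac0 : 0 ≤ (1 - p) / m := div_nonneg h1p hm0.le
  have hfrac1 : (1 - p) / m ≤ 1 := by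
    rw [div_le_one hm0]; linarith
  refine ⟨?_, ?_, ?_⟩
  · rw [h1, Complex.norm_real, Real.norm_eq_abs, abs_neg, abs_of_nonneg hfrac0]
    exact hkey
  · rw [h3, Complex.norm_real, Real.norm_eq_abs, abs_of_nonneg (by linarith)]
    linarith
  · rw [h3, Complex.norm_real, Real.norm_eq_abs, abs_of_nonneg (by linarith)]
    have : (1 - p) / m ≤ (Real.sqrt m)⁻¹ := le_trans hkey hkey2
    linarith
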